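/- arXiv:2511.18218 — 2 statements merged into one kernel-verified Lean document; each statement's English description precedes it below -/
import Mathlib

section
/- Let k be an algebraically closed field, let 𝔗 be a semisimple pre-Tannakian category over k, and let A be a simple algebra in 𝔗. Then the unit object 𝟙 appears in A with multiplicity one; equivalently, Hom(𝟙, A) is one-dimensional over k. -/
open CategoryTheory CategoryTheory.Limits CategoryTheory.MonoidalCategory

/-!
We work with a pre-Tannakian category over a field `k`: an abelian `k`-linear symmetric
monoidal category with `k`-bilinear tensor product, in which every object has finite
length, all Hom-spaces are finite dimensional over `k`, every object is rigid, and the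
canonical map `k → End 𝟙` is bijective. Algebras are commutative monoid objects.
-/

section
variable {k : Type*} [Field k]
variable {C : Type*} [Category C] [Abelian C] [Linear k C]
  [MonoidalCategory C] [MonoidalPreadditive C] [MonoidalLinear k C]
  [SymmetricCategory C] [RigidCategory C]

/-- `I` is an ideal of the commutative algebra object `A`: the multiplication restricted
to `A ⊗ I` factors through `I`. -/
def IsIdeal (A : CommMon C) (I : Subobject A.X) : Prop :=
  I.Factors ((A.X ◁ I.arrow) ≫ (MonObj.mul (X := A.X)))

/-- A commutative algebra object is simple if it is nonzero and its only ideals are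
the zero ideal and the unit ideal. -/
def IsSimpleAlgebra (A : CommMon C) : Prop :=
  ¬ IsZero A.X ∧ ∀ I : Subobject A.X, IsIdeal A I → I = ⊥ ∨ I = ⊤

/-- The product on `Γ(A) = Hom(𝟙, A)`, given by `x · y = μ ∘ (x ⊗ y) ∘ (unitor)⁻¹`. -/
def gammaMul (A : CommMon C) (x y : 𝟙_ C ⟶ A.X) : 𝟙_ C ⟶ A.X :=
  (λ_ (𝟙_ C)).inv ≫ (x ⊗ₘ y) ≫ (MonObj.mul (X := A.X))

/-- The morphism `A ⟶ Aᘁ` induced by a bilinear form `f : A ⊗ A ⟶ 𝟙`. -/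
noncomputable def pairingHom (A : C) (f : A ⊗ A ⟶ 𝟙_ C) : A ⟶ Aᘁ :=
  (tensorRightHomEquiv A A (Aᘁ) (𝟙_ C)) f ≫ (λ_ (Aᘁ)).hom

/-- A bilinear form `f : A ⊗ A ⟶ 𝟙` is perfect if the induced morphism `A ⟶ Aᘁ`
is an isomorphism. -/
def IsPerfectPairing (A : C) (f : A ⊗ A ⟶ 𝟙_ C) : Prop :=
  IsIso (pairingHom A f)

/-- The trace map `ε_A : A ⟶ 𝟙` of an algebra object: the mate `A ⟶ A ⊗ Aᘁ` of the
multiplication (encoding the action of `A` on itself by multiplication) composed with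
the symmetry and the evaluation. -/
noncomputable def traceMap (A : CommMon C) : A.X ⟶ 𝟙_ C :=
  (tensorRightHomEquiv A.X A.X (A.Xᘁ) A.X) (MonObj.mul (X := A.X)) ≫ (β_ A.X (A.Xᘁ)).hom ≫ ε_ A.X (A.Xᘁ)

/-- An algebra object is étale if its trace form `ε_A ∘ μ` is a perfect pairing. -/
noncomputable def IsEtale (A : CommMon C) : Prop :=
  IsPerfectPairing A.X ((MonObj.mul (X := A.X)) ≫ traceMap A)

/-- The categorical dimension of `X`, as an endomorphism of the unit object:
the composite of coevaluation, symmetry and evaluation. -/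
noncomputable def dimMor (X : C) : 𝟙_ C ⟶ 𝟙_ C :=
  η_ X (Xᘁ) ≫ (β_ X (Xᘁ)).hom ≫ ε_ X (Xᘁ)

/-- A category is semisimple if every object is a finite direct sum of simple objects. -/
def IsSemisimpleCategory : Prop :=
  haveI : HasFiniteBiproducts C := Abelian.hasFiniteBiproducts
  ∀ X : C, ∃ (n : ℕ) (f : Fin n → C), (∀ i, Simple (f i)) ∧ Nonempty (X ≅ ⨁ f)

end

section AuxStmt1
variable {k : Type*} [Field k]
variable {C : Type*} [Category C] [Abelian C] [Linear k C]
  [MonoidalCategory C] [MonoidalPreadditive C] [MonoidalLinear k C]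
  [SymmetricCategory C] [RigidCategory C]

/-- Right multiplication by `x : 𝟙 ⟶ A`. -/
noncomputable def rmulAux (A : CommMon C) (x : 𝟙_ C ⟶ A.X) : A.X ⟶ A.X :=
  (ρ_ A.X).inv ≫ (A.X ◁ x) ≫ (MonObj.mul (X := A.X))

set_option linter.unusedSectionVars false in
lemma one_rmulAux (A : CommMon C) (x : 𝟙_ C ⟶ A.X) : (MonObj.one (X := A.X)) ≫ rmulAux A x = x := by
  rw [rmulAux, rightUnitor_inv_naturality_assoc, ← whisker_exchange_assoc,
    MonObj.one_mul]
  rw [leftUnitor_naturality, unitors_equal, Iso.inv_hom_id_assoc]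

set_option linter.unusedSectionVars false in
lemma rmulAux_one (A : CommMon C) : rmulAux A (MonObj.one (X := A.X)) = 𝟙 A.X := by
  simp [rmulAux, MonObj.mul_one]

set_option linter.unusedSectionVars false in
lemma whiskerLeft_subAux (X : C) {Y Z : C} (f g : Y ⟶ Z) :
    X ◁ (f - g) = X ◁ f - X ◁ g := by
  simpa using (tensorLeft X).map_sub (f := f) (g := g)

set_option linter.unusedSectionVars false in
lemma rmulAux_sub_smul (A : CommMon C) (x y : 𝟙_ C ⟶ A.X) (c : k) :
    rmulAux A (x - c • y) = rmulAux A x - c • rmulAux A y := by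
  simp [rmulAux, whiskerLeft_subAux, Preadditive.sub_comp,
    Preadditive.comp_sub, Linear.comp_smul, Linear.smul_comp]

set_option linter.unusedSectionVars false in
lemma mul_rmulAux (A : CommMon C) (x : 𝟙_ C ⟶ A.X) :
    (A.X ◁ rmulAux A x) ≫ (MonObj.mul (X := A.X)) = (MonObj.mul (X := A.X)) ≫ rmulAux A x := by
  simp only [rmulAux, MonoidalCategory.whiskerLeft_comp, Category.assoc]
  rw [MonObj.mul_assoc_flip, associator_inv_naturality_right_assoc,
    whiskerLeft_rightUnitor_inv_assoc, rightUnitor_inv_naturality_assoc,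
    ← whisker_exchange_assoc]
  simp

set_option linter.unusedSectionVars false in
lemma isIso_of_epi_endoAux {X : C} [FiniteDimensional k (X ⟶ X)] (m : X ⟶ X)
    (hm : Epi m) : IsIso m := by
  have hinj : Function.Injective (Linear.leftComp (R := k) X m) := by
    intro a b hab
    exact (cancel_epi m).1 hab
  obtain ⟨g, hg⟩ := LinearMap.injective_iff_surjective.1 hinj (𝟙 X)
  haveI : IsSplitMono m := IsSplitMono.mk' ⟨g, hg⟩
  exact isIso_of_mono_of_epi m

set_option linter.unusedSectionVars false in
lemma isIso_rmulAux (hfin : ∀ X Y : C, FiniteDimensional k (X ⟶ Y))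
    (A : CommMon C) (hA : IsSimpleAlgebra A) {x : 𝟙_ C ⟶ A.X} (hx : x ≠ 0) :
    IsIso (rmulAux A x) := by
  haveI := hfin A.X A.X
  set m := rmulAux A x with hm
  have hm0 : m ≠ 0 := fun h => hx (by rw [← one_rmulAux A x, ← hm, h, comp_zero])
  have hfac : IsIdeal A (imageSubobject m) := by
    have key : ((MonObj.mul (X := A.X)) ≫ factorThruImageSubobject m) ≫ (imageSubobject m).arrow
        = (A.X ◁ factorThruImageSubobject m)
            ≫ ((A.X ◁ (imageSubobject m).arrow) ≫ (MonObj.mul (X := A.X))) := by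
      rw [Category.assoc, imageSubobject_arrow_comp,
        ← MonoidalCategory.whiskerLeft_comp_assoc, imageSubobject_arrow_comp,
        mul_rmulAux]
    haveI : (tensorLeft A.X).IsLeftAdjoint :=
      ⟨_, ⟨tensorLeftAdjunction (ᘁA.X) A.X⟩⟩
    haveI : Epi ((tensorLeft A.X).map (factorThruImageSubobject m)) := inferInstance
    haveI h2 : Epi (A.X ◁ factorThruImageSubobject m) := by simpa using this
    haveI : StrongEpi (A.X ◁ factorThruImageSubobject m) := strongEpi_of_epi _
    have sq : CommSq ((MonObj.mul (X := A.X)) ≫ factorThruImageSubobject m)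
        (A.X ◁ factorThruImageSubobject m) (imageSubobject m).arrow
        ((A.X ◁ (imageSubobject m).arrow) ≫ (MonObj.mul (X := A.X))) := ⟨key⟩
    exact (Subobject.factors_iff _ _).2 ⟨sq.lift, sq.fac_right⟩
  rcases hA.2 (imageSubobject m) hfac with h | h
  · exfalso
    have hf : (imageSubobject m).Factors m :=
      (Subobject.factors_iff _ _).2 ⟨factorThruImageSubobject m, imageSubobject_arrow_comp m⟩
    rw [h] at hf
    exact hm0 (by rw [← Subobject.factorThru_arrow _ m hf, Subobject.bot_arrow, comp_zero])
  · haveI : IsIso (imageSubobject m).arrow := by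
      rw [Subobject.isIso_arrow_iff_eq_top]; exact h
    have hepi : Epi m := by
      rw [← imageSubobject_arrow_comp m]; exact epi_comp _ _
    exact isIso_of_epi_endoAux (k := k) m hepi

end AuxStmt1

/-- Let `k` be an algebraically closed field, let `𝔗` be a semisimple
pre-Tannakian category over `k`, and let `A` be a simple algebra in `𝔗`. Then the unit
object `𝟙` appears in `A` with multiplicity one; equivalently, `Hom(𝟙, A)` is
one-dimensional over `k`. -/
theorem stmt_1 {k : Type*} [Field k] [IsAlgClosed k]
    {C : Type*} [Category C] [Abelian C] [Linear k C]
    [MonoidalCategory C] [MonoidalPreadditive C] [MonoidalLinear k C]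
    [SymmetricCategory C] [RigidCategory C]
    (hlen : ∀ X : C, WellFoundedGT (Subobject X) ∧ WellFoundedLT (Subobject X))
    (hfin : ∀ X Y : C, FiniteDimensional k (X ⟶ Y))
    (hunit : Function.Bijective fun a : k => a • 𝟙 (𝟙_ C))
    (hss : IsSemisimpleCategory (C := C))
    (A : CommMon C) (hA : IsSimpleAlgebra A) :
    Module.finrank k (𝟙_ C ⟶ A.X) = 1 := by
  haveI := hfin (𝟙_ C) A.X
  have hu : (MonObj.one (X := A.X)) ≠ 0 := by
    intro h
    refine hA.1 ?_
    rw [IsZero.iff_id_eq_zero]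
    have h1 := MonObj.one_mul A.X
    rw [h, MonoidalPreadditive.zero_whiskerRight, zero_comp] at h1
    rw [← Category.comp_id (𝟙 A.X), ← Iso.inv_hom_id (λ_ A.X), ← h1]
    simp
  haveI : Nontrivial (𝟙_ C ⟶ A.X) := nontrivial_of_ne _ _ hu
  rw [finrank_eq_one_iff_of_nonzero' (MonObj.one (X := A.X)) hu]
  intro x
  set T : Module.End k (𝟙_ C ⟶ A.X) := Linear.rightComp k (𝟙_ C) (rmulAux A x) with hT
  obtain ⟨c, hc⟩ := Module.End.exists_eigenvalue T
  obtain ⟨y, hy⟩ := hc.exists_hasEigenvector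
  by_cases hz : x - c • (MonObj.one (X := A.X)) = 0
  · exact ⟨c, (sub_eq_zero.1 hz).symm⟩
  · exfalso
    haveI := isIso_rmulAux hfin A hA hz
    have h0 : y ≫ rmulAux A (x - c • (MonObj.one (X := A.X))) = 0 := by
      have hyx : y ≫ rmulAux A x = c • y := hy.apply_eq_smul
      rw [rmulAux_sub_smul, Preadditive.comp_sub, Linear.comp_smul, rmulAux_one,
        Category.comp_id, hyx, sub_self]
    refine hy.2 ((cancel_mono (rmulAux A (x - c • (MonObj.one (X := A.X))))).1 ?_)
    rw [h0, zero_comp]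
end

section
/- Let 𝔗 be a semisimple pre-Tannakian category over a field k and let A be a simple algebra in 𝔗. Then there exists a morphism λ : A → 𝟙 such that (A, λ) is a Frobenius algebra. -/
open CategoryTheory CategoryTheory.Limits CategoryTheory.MonoidalCategory

section AuxFrobenius

set_option linter.unusedSectionVars false

variable {k : Type*} [Field k]
variable {C : Type*} [Category C] [Abelian C] [Linear k C]
  [MonoidalCategory C] [MonoidalPreadditive C] [MonoidalLinear k C]
  [SymmetricCategory C] [RigidCategory C]

private lemma tensorRightHomEquiv_zero' (X Y Y' Z : C) [ExactPairing Y Y'] :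
    (tensorRightHomEquiv X Y Y' Z) 0 = 0 := by
  simp [tensorRightHomEquiv]

private lemma tensorRightHomEquiv_symm_zero' (X Y Y' Z : C) [ExactPairing Y Y'] :
    (tensorRightHomEquiv X Y Y' Z).symm 0 = 0 := by
  simp [tensorRightHomEquiv]

private lemma comp_pairingHom' {W A : C} (p : W ⟶ A) (f : A ⊗ A ⟶ 𝟙_ C) :
    p ≫ pairingHom A f
      = (tensorRightHomEquiv W A (Aᘁ) (𝟙_ C)) ((p ▷ A) ≫ f) ≫ (λ_ (Aᘁ)).hom := by
  rw [pairingHom, ← Category.assoc]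
  congr 1
  apply (tensorRightHomEquiv W A (Aᘁ) (𝟙_ C)).symm.injective
  rw [Equiv.symm_apply_apply, tensorRightHomEquiv_symm_naturality, Equiv.symm_apply_apply]

private lemma comp_pairingHom_eq_zero_iff' {W A : C} (p : W ⟶ A) (f : A ⊗ A ⟶ 𝟙_ C) :
    p ≫ pairingHom A f = 0 ↔ (p ▷ A) ≫ f = 0 := by
  rw [comp_pairingHom']
  constructor
  · intro h
    have h2 : (tensorRightHomEquiv W A (Aᘁ) (𝟙_ C)) ((p ▷ A) ≫ f) = 0 := by
      have := congrArg (fun t => t ≫ (λ_ (Aᘁ)).inv) h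
      simpa using this
    have h3 := congrArg (tensorRightHomEquiv W A (Aᘁ) (𝟙_ C)).symm h2
    rwa [Equiv.symm_apply_apply, tensorRightHomEquiv_symm_zero'] at h3
  · intro h
    rw [h, tensorRightHomEquiv_zero', zero_comp]

private lemma pairingHom_whiskerRight_evaluation' {A : C} (f : A ⊗ A ⟶ 𝟙_ C) :
    (pairingHom A f ▷ A) ≫ ε_ A (Aᘁ) = f := by
  have h0 : (tensorRightHomEquiv A A (Aᘁ) (𝟙_ C)).symm
      ((tensorRightHomEquiv A A (Aᘁ) (𝟙_ C)) f) = f := Equiv.symm_apply_apply _ _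
  have hcoh : ((λ_ (Aᘁ)).hom ▷ A) ≫ ε_ A (Aᘁ)
      = (α_ (𝟙_ C) (Aᘁ) A).hom ≫ (𝟙_ C ◁ ε_ A (Aᘁ)) ≫ (ρ_ (𝟙_ C)).hom := by
    rw [← unitors_equal, MonoidalCategory.leftUnitor_naturality,
      MonoidalCategory.leftUnitor_tensor_hom_assoc]
    simp
  rw [pairingHom, comp_whiskerRight, Category.assoc, hcoh]
  exact h0

private lemma ideal_step' (A : CommMon C) (lam : A.X ⟶ 𝟙_ C) {W : C} (κ : W ⟶ A.X)
    (hκ : (κ ▷ A.X) ≫ ((MonObj.mul (X := A.X)) ≫ lam) = 0) :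
    (((A.X ◁ κ) ≫ (MonObj.mul (X := A.X))) ▷ A.X) ≫ ((MonObj.mul (X := A.X)) ≫ lam) = 0 := by
  have step3 : ((κ ▷ A.X ≫ (MonObj.mul (X := A.X))) ▷ A.X) ≫ (MonObj.mul (X := A.X)) ≫ lam = 0 := by
    rw [comp_whiskerRight, Category.assoc, MonObj.mul_assoc_assoc,
      associator_naturality_left_assoc, ← whisker_exchange_assoc, hκ]
    simp
  have step2 : (A.X ◁ (κ ▷ A.X ≫ (MonObj.mul (X := A.X)))) ≫ (MonObj.mul (X := A.X)) ≫ lam = 0 := by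
    have e1 : (A.X ◁ (κ ▷ A.X ≫ (MonObj.mul (X := A.X)))) ≫ (β_ A.X A.X).hom ≫ (MonObj.mul (X := A.X)) ≫ lam
        = (A.X ◁ (κ ▷ A.X ≫ (MonObj.mul (X := A.X)))) ≫ (MonObj.mul (X := A.X)) ≫ lam := by
      rw [IsCommMonObj.mul_comm_assoc]
    rw [← e1, BraidedCategory.braiding_naturality_right_assoc, step3]
    simp
  rw [comp_whiskerRight, Category.assoc, MonObj.mul_assoc_assoc,
    associator_naturality_middle_assoc, ← MonoidalCategory.whiskerLeft_comp_assoc, step2]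
  simp

private lemma pairing_epi' {A : C} (B : A ⊗ A ⟶ 𝟙_ C) (hB : (β_ A A).hom ≫ B = B)
    (hmono : Mono (pairingHom A B)) : Epi (pairingHom A B) := by
  apply Preadditive.epi_of_cancel_zero
  intro Z g hg
  letI pAA : ExactPairing (Aᘁ) A := BraidedCategory.exactPairing_swap A (Aᘁ)
  letI pZZ : ExactPairing (Zᘁ) Z := BraidedCategory.exactPairing_swap Z (Zᘁ)
  haveI : (tensorRight Z).PreservesMonomorphisms :=
    Functor.preservesMonomorphisms_of_adjunction (tensorRightAdjunction (Zᘁ) Z)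
  have hmono' : Mono (pairingHom A B ▷ Z) := by
    have h := (tensorRight Z).map_mono (pairingHom A B)
    simpa using h
  set gh : 𝟙_ C ⟶ A ⊗ Z := (tensorLeftHomEquiv (𝟙_ C) A (Aᘁ) Z) ((ρ_ (Aᘁ)).hom ≫ g) with hgh
  have hrec0 : (tensorLeftHomEquiv (𝟙_ C) A (Aᘁ) Z).symm gh = (ρ_ (Aᘁ)).hom ≫ g := by
    rw [hgh]; exact Equiv.symm_apply_apply _ _
  have hrec : (Aᘁ) ◁ gh ≫ (α_ (Aᘁ) A Z).inv ≫ (ε_ A (Aᘁ)) ▷ Z ≫ (λ_ Z).hom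
      = (ρ_ (Aᘁ)).hom ≫ g := by
    simpa only [tensorLeftHomEquiv, Equiv.coe_fn_symm_mk] using hrec0
  have hclaim : gh ≫ (pairingHom A B ▷ Z) = 0 := by
    apply (tensorLeftHomEquiv (𝟙_ C) (Aᘁ) A Z).symm.injective
    have hz : (tensorLeftHomEquiv (𝟙_ C) (Aᘁ) A Z).symm 0 = 0 := by
      simp [tensorLeftHomEquiv]
    rw [hz]
    have hε : (ε_ (Aᘁ) A : A ⊗ (Aᘁ) ⟶ 𝟙_ C) = (β_ A (Aᘁ)).hom ≫ ε_ A (Aᘁ) := rfl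
    have hinner : (A ◁ pairingHom A B) ≫ (β_ A (Aᘁ)).hom ≫ ε_ A (Aᘁ)
        = (pairingHom A B ▷ A) ≫ ε_ A (Aᘁ) := by
      rw [BraidedCategory.braiding_naturality_right_assoc,
        pairingHom_whiskerRight_evaluation', hB, ← pairingHom_whiskerRight_evaluation' (f := B)]
    show A ◁ (gh ≫ pairingHom A B ▷ Z) ≫ (α_ A (Aᘁ) Z).inv ≫ (ε_ (Aᘁ) A) ▷ Z ≫ (λ_ Z).hom = 0
    calc A ◁ (gh ≫ pairingHom A B ▷ Z) ≫ (α_ A (Aᘁ) Z).inv ≫ (ε_ (Aᘁ) A) ▷ Z ≫ (λ_ Z).hom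
        = A ◁ gh ≫ (α_ A A Z).inv
            ≫ (((A ◁ pairingHom A B) ≫ (β_ A (Aᘁ)).hom ≫ ε_ A (Aᘁ)) ▷ Z) ≫ (λ_ Z).hom := by
          rw [hε, MonoidalCategory.whiskerLeft_comp_assoc,
            associator_inv_naturality_middle_assoc]
          simp only [comp_whiskerRight, Category.assoc]
      _ = A ◁ gh ≫ (α_ A A Z).inv ≫ ((pairingHom A B ▷ A) ▷ Z)
            ≫ ((ε_ A (Aᘁ)) ▷ Z) ≫ (λ_ Z).hom := by
          rw [hinner]
          simp only [comp_whiskerRight, Category.assoc]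
      _ = (pairingHom A B ▷ 𝟙_ C)
            ≫ ((Aᘁ) ◁ gh ≫ (α_ (Aᘁ) A Z).inv ≫ (ε_ A (Aᘁ)) ▷ Z ≫ (λ_ Z).hom) := by
          rw [← associator_inv_naturality_left_assoc, whisker_exchange_assoc]
      _ = (pairingHom A B ▷ 𝟙_ C) ≫ (ρ_ (Aᘁ)).hom ≫ g := by rw [hrec]
      _ = (ρ_ A).hom ≫ pairingHom A B ≫ g := by
          rw [MonoidalCategory.rightUnitor_naturality_assoc]
      _ = 0 := by rw [hg, comp_zero]
  have hgh0 : gh = 0 := by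
    rw [← cancel_mono (pairingHom A B ▷ Z), hclaim, zero_comp]
  have hres : (ρ_ (Aᘁ)).hom ≫ g = 0 := by
    rw [← hrec, hgh0]
    simp
  rw [← cancel_epi (ρ_ (Aᘁ)).hom, hres, comp_zero]

private lemma unit_simple' (hunit : Function.Bijective fun a : k => a • 𝟙 (𝟙_ C))
    (hss : IsSemisimpleCategory (C := C)) : Simple (𝟙_ C) := by
  classical
  haveI : HasFiniteBiproducts C := Abelian.hasFiniteBiproducts
  obtain ⟨n, f, hf, ⟨e⟩⟩ := hss (𝟙_ C)
  have key : ∃ i, e.hom ≫ biproduct.π f i ≫ biproduct.ι f i ≫ e.inv = 𝟙 (𝟙_ C) := by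
    have hsum : (∑ i, e.hom ≫ biproduct.π f i ≫ biproduct.ι f i ≫ e.inv) = 𝟙 (𝟙_ C) := by
      calc (∑ i, e.hom ≫ biproduct.π f i ≫ biproduct.ι f i ≫ e.inv)
          = e.hom ≫ (∑ i, biproduct.π f i ≫ biproduct.ι f i) ≫ e.inv := by
            rw [Preadditive.sum_comp, Preadditive.comp_sum]
            simp [Category.assoc]
        _ = 𝟙 (𝟙_ C) := by rw [biproduct.total]; simp
    choose a ha using fun i => hunit.2 (e.hom ≫ biproduct.π f i ≫ biproduct.ι f i ≫ e.inv)
    have ha' : ∀ i, a i • 𝟙 (𝟙_ C) = e.hom ≫ biproduct.π f i ≫ biproduct.ι f i ≫ e.inv :=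
      fun i => ha i
    have hsa : (∑ i, a i) = 1 := by
      apply hunit.1
      show (∑ i, a i) • 𝟙 (𝟙_ C) = (1 : k) • 𝟙 (𝟙_ C)
      rw [one_smul, Finset.sum_smul]
      simpa [ha'] using hsum
    obtain ⟨i, -, hi⟩ := Finset.exists_ne_zero_of_sum_ne_zero
      (by rw [hsa]; exact (one_ne_zero : (1 : k) ≠ 0))
    have hidem : (e.hom ≫ biproduct.π f i ≫ biproduct.ι f i ≫ e.inv)
        ≫ (e.hom ≫ biproduct.π f i ≫ biproduct.ι f i ≫ e.inv)
        = e.hom ≫ biproduct.π f i ≫ biproduct.ι f i ≫ e.inv := by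
      simp
    have haa : a i * a i = a i := by
      apply hunit.1
      show (a i * a i) • 𝟙 (𝟙_ C) = a i • 𝟙 (𝟙_ C)
      calc (a i * a i) • 𝟙 (𝟙_ C)
          = (a i • 𝟙 (𝟙_ C)) ≫ (a i • 𝟙 (𝟙_ C)) := by
            rw [Linear.smul_comp, Linear.comp_smul, smul_smul]
            simp
        _ = a i • 𝟙 (𝟙_ C) := by rw [ha' i, hidem]
    have hai : a i = 1 := by
      have h1 : a i * a i = a i * 1 := by rw [haa, mul_one]
      exact mul_left_cancel₀ hi h1
    exact ⟨i, by rw [← ha' i, hai, one_smul]⟩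
  obtain ⟨i, hi⟩ := key
  haveI := hf i
  exact Simple.of_iso
    (⟨e.hom ≫ biproduct.π f i, biproduct.ι f i ≫ e.inv,
      by simpa [Category.assoc] using hi, by simp⟩ : (𝟙_ C) ≅ f i)

end AuxFrobenius

/-- Let `𝔗` be a semisimple pre-Tannakian category over a field `k` and
let `A` be a simple algebra in `𝔗`. Then there exists a morphism `λ : A → 𝟙` such that
`(A, λ)` is a Frobenius algebra, i.e. the form `λ ∘ μ : A ⊗ A ⟶ 𝟙` is perfect. -/
theorem stmt_3 {k : Type*} [Field k]
    {C : Type*} [Category C] [Abelian C] [Linear k C]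
    [MonoidalCategory C] [MonoidalPreadditive C] [MonoidalLinear k C]
    [SymmetricCategory C] [RigidCategory C]
    (hlen : ∀ X : C, WellFoundedGT (Subobject X) ∧ WellFoundedLT (Subobject X))
    (hfin : ∀ X Y : C, FiniteDimensional k (X ⟶ Y))
    (hunit : Function.Bijective fun a : k => a • 𝟙 (𝟙_ C))
    (hss : IsSemisimpleCategory (C := C))
    (A : CommMon C) (hA : IsSimpleAlgebra A) :
    ∃ lam : A.X ⟶ 𝟙_ C, IsPerfectPairing A.X ((MonObj.mul (X := A.X)) ≫ lam) := by
  classical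
  haveI : HasFiniteBiproducts C := Abelian.hasFiniteBiproducts
  obtain ⟨hA0, hAid⟩ := hA
  haveI hsone : Simple (𝟙_ C) := unit_simple' hunit hss
  have hone_ne : (𝟙 (𝟙_ C) : 𝟙_ C ⟶ 𝟙_ C) ≠ 0 := by
    intro h
    refine (one_ne_zero : (1 : k) ≠ 0) (hunit.1 ?_)
    show (1 : k) • 𝟙 (𝟙_ C) = (0 : k) • 𝟙 (𝟙_ C)
    rw [one_smul, zero_smul, h]
  have hu_ne : (MonObj.one (X := A.X)) ≠ 0 := by
    intro h
    apply hA0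
    rw [IsZero.iff_id_eq_zero]
    calc 𝟙 A.X = (λ_ A.X).inv ≫ ((MonObj.one (X := A.X)) ▷ A.X) ≫ (MonObj.mul (X := A.X)) := by rw [MonObj.one_mul A.X]; simp
      _ = 0 := by rw [h]; simp
  obtain ⟨lam, hlam⟩ : ∃ lam : A.X ⟶ 𝟙_ C, (MonObj.one (X := A.X)) ≫ lam = 𝟙 (𝟙_ C) := by
    obtain ⟨n, f, hf, ⟨e⟩⟩ := hss A.X
    have h1 : (MonObj.one (X := A.X)) ≫ e.hom ≠ 0 := by
      intro h
      apply hu_ne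
      have := congrArg (fun t => t ≫ e.inv) h
      simpa using this
    obtain ⟨j, hj⟩ : ∃ j, ((MonObj.one (X := A.X)) ≫ e.hom) ≫ biproduct.π f j ≠ 0 := by
      by_contra hcon
      push_neg at hcon
      exact h1 (biproduct.hom_ext _ _ fun j => by simpa using hcon j)
    haveI := hf j
    haveI : IsIso (((MonObj.one (X := A.X)) ≫ e.hom) ≫ biproduct.π f j) := isIso_of_hom_simple hj
    refine ⟨(e.hom ≫ biproduct.π f j) ≫ inv (((MonObj.one (X := A.X)) ≫ e.hom) ≫ biproduct.π f j), ?_⟩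
    simpa only [Category.assoc] using
      IsIso.hom_inv_id (((MonObj.one (X := A.X)) ≫ e.hom) ≫ biproduct.π f j)
  refine ⟨lam, ?_⟩
  rw [IsPerfectPairing]
  have hker : IsIdeal A (kernelSubobject (pairingHom A.X ((MonObj.mul (X := A.X)) ≫ lam))) := by
    apply kernelSubobject_factors
    rw [comp_pairingHom_eq_zero_iff']
    apply ideal_step'
    rw [← comp_pairingHom_eq_zero_iff' (f := (MonObj.mul (X := A.X)) ≫ lam)]
    exact kernelSubobject_arrow_comp (pairingHom A.X ((MonObj.mul (X := A.X)) ≫ lam))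
  rcases hAid _ hker with hbot | htop
  · have harrow0 : (kernelSubobject (pairingHom A.X ((MonObj.mul (X := A.X)) ≫ lam))).arrow = 0 := by
      have hle : kernelSubobject (pairingHom A.X ((MonObj.mul (X := A.X)) ≫ lam)) ≤ ⊥ := le_of_eq hbot
      rw [← Subobject.ofLE_arrow hle, Subobject.bot_arrow, comp_zero]
    have hmono : Mono (pairingHom A.X ((MonObj.mul (X := A.X)) ≫ lam)) := by
      apply Preadditive.mono_of_kernel_zero
      have h := kernelSubobject_arrow (f := pairingHom A.X ((MonObj.mul (X := A.X)) ≫ lam))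
      rw [harrow0] at h
      calc kernel.ι (pairingHom A.X ((MonObj.mul (X := A.X)) ≫ lam))
          = (kernelSubobjectIso (pairingHom A.X ((MonObj.mul (X := A.X)) ≫ lam))).inv
            ≫ (kernelSubobjectIso (pairingHom A.X ((MonObj.mul (X := A.X)) ≫ lam))).hom
            ≫ kernel.ι (pairingHom A.X ((MonObj.mul (X := A.X)) ≫ lam)) := by simp
        _ = 0 := by rw [h, comp_zero]
    have hepi : Epi (pairingHom A.X ((MonObj.mul (X := A.X)) ≫ lam)) :=
      pairing_epi' ((MonObj.mul (X := A.X)) ≫ lam) (by rw [IsCommMonObj.mul_comm_assoc]) hmono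
    exact isIso_of_mono_of_epi _
  · exfalso
    haveI : IsIso (kernelSubobject (pairingHom A.X ((MonObj.mul (X := A.X)) ≫ lam))).arrow :=
      (Subobject.isIso_arrow_iff_eq_top _).mpr htop
    have hφ0 : pairingHom A.X ((MonObj.mul (X := A.X)) ≫ lam) = 0 := by
      rw [← cancel_epi (kernelSubobject (pairingHom A.X ((MonObj.mul (X := A.X)) ≫ lam))).arrow,
        kernelSubobject_arrow_comp, comp_zero]
    have hmullam : (MonObj.mul (X := A.X)) ≫ lam = 0 := by
      have h := (comp_pairingHom_eq_zero_iff' (𝟙 A.X) ((MonObj.mul (X := A.X)) ≫ lam)).mp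
        (by rw [hφ0, comp_zero])
      simpa using h
    have hl0 : lam = 0 := by
      calc lam = (λ_ A.X).inv ≫ (λ_ A.X).hom ≫ lam := by simp
        _ = (λ_ A.X).inv ≫ (((MonObj.one (X := A.X)) ▷ A.X) ≫ (MonObj.mul (X := A.X))) ≫ lam := by rw [MonObj.one_mul A.X]
        _ = 0 := by rw [Category.assoc, hmullam]; simp
    rw [hl0, comp_zero] at hlam
    exact hone_ne hlam.symm
end
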